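/- Let n be a positive integer, let γ : ℝⁿ → ℝ be a continuous function with γ(0) = 0 and γ(y) > 0 for every y ≠ 0, and let x : [0,∞) → ℝⁿ be a differentiable function such that: (i) there exists M > 0 with ‖x(t)‖ ≤ M for all t ≥ 0, (ii) there exists M' > 0 with ‖x'(t)‖ ≤ M' for all t ≥ 0, and (iii) the limit as t → ∞ of ∫₀ᵗ γ(x(s)) ds exists and is finite. Then lim_{t→∞} ‖x(t)‖ = 0. -/

import Mathlib

open Filter MeasureTheory intervalIntegral

/-- **Barbalat-type lemma (Michalska–Mayne).**
Let `γ : ℝⁿ → ℝ` be continuous and positive definite (`γ(0) = 0`, `γ(y) > 0`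
for `y ≠ 0`) and let `x : [0,∞) → ℝⁿ` be differentiable with `x` and its
derivative uniformly bounded. If `∫₀ᵗ γ(x(s)) ds` converges to a finite limit
as `t → ∞`, then `‖x(t)‖ → 0` as `t → ∞`. -/
theorem barbalat_type_lemma (n : ℕ) (hn : 0 < n)
    (γ : EuclideanSpace ℝ (Fin n) → ℝ) (hγc : Continuous γ)
    (hγ0 : γ 0 = 0) (hγpos : ∀ y : EuclideanSpace ℝ (Fin n), y ≠ 0 → 0 < γ y)
    (x x' : ℝ → EuclideanSpace ℝ (Fin n))
    (hderiv : ∀ t : ℝ, 0 ≤ t → HasDerivAt x (x' t) t)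
    (M : ℝ) (hM : 0 < M) (hxbd : ∀ t : ℝ, 0 ≤ t → ‖x t‖ ≤ M)
    (M' : ℝ) (hM' : 0 < M') (hx'bd : ∀ t : ℝ, 0 ≤ t → ‖x' t‖ ≤ M')
    (L : ℝ)
    (hint : Tendsto (fun t : ℝ => ∫ s in (0:ℝ)..t, γ (x s)) atTop (nhds L)) :
    Tendsto (fun t : ℝ => ‖x t‖) atTop (nhds 0) := by
  by_contra hcon
  rw [Metric.tendsto_atTop] at hcon
  push_neg at hcon
  obtain ⟨ε, hε, hfreq⟩ := hcon
  have hxc : ContinuousOn x (Set.Ici 0) := fun t ht =>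
    ((hderiv t ht).continuousAt).continuousWithinAt
  set f : ℝ → ℝ := fun s => γ (x s) with hfdef
  have hfc : ContinuousOn f (Set.Ici 0) := hγc.comp_continuousOn hxc
  have hfint : ∀ a b : ℝ, 0 ≤ a → a ≤ b → IntervalIntegrable f volume a b := by
    intro a b ha hab
    apply (hfc.mono ?_).intervalIntegrable
    rw [Set.uIcc_of_le hab]
    exact fun s hs => le_trans ha hs.1
  -- point with big norm, to show annulus nonempty
  obtain ⟨t₀, ht₀, hxt₀'⟩ := hfreq 0
  have hxt₀ : ε ≤ ‖x t₀‖ := by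
    simpa [Real.dist_eq, abs_of_nonneg (norm_nonneg _)] using hxt₀'
  -- the compact annulus
  set A : Set (EuclideanSpace ℝ (Fin n)) :=
    Metric.closedBall 0 M ∩ {y | ε / 2 ≤ ‖y‖} with hA
  have hAcompact : IsCompact A :=
    (isCompact_closedBall 0 M).inter_right (isClosed_le continuous_const continuous_norm)
  have hmem0 : x t₀ ∈ A := by
    constructor
    · simpa [Metric.mem_closedBall, dist_eq_norm] using hxbd t₀ ht₀
    · exact le_trans (by linarith) hxt₀
  obtain ⟨y₀, hy₀A, hy₀min⟩ := hAcompact.exists_isMinOn ⟨x t₀, hmem0⟩ hγc.continuousOn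
  set δ : ℝ := γ y₀ with hδdef
  have hδpos : 0 < δ := by
    apply hγpos
    intro hy
    have : ε / 2 ≤ ‖y₀‖ := hy₀A.2
    rw [hy, norm_zero] at this
    linarith
  set h : ℝ := ε / (2 * M') with hhdef
  have hhpos : 0 < h := by positivity
  rw [Metric.tendsto_atTop] at hint
  obtain ⟨T, hT⟩ := hint (δ * h / 2) (by positivity)
  obtain ⟨t, ht, hxt'⟩ := hfreq (max T 0)
  have ht0 : (0:ℝ) ≤ t := le_trans (le_max_right _ _) ht
  have htT : T ≤ t := le_trans (le_max_left _ _) ht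
  have hxt : ε ≤ ‖x t‖ := by
    simpa [Real.dist_eq, abs_of_nonneg (norm_nonneg _)] using hxt'
  have hab : t ≤ t + h := by linarith
  -- Lipschitz bound on [t, t+h]
  have hlow : ∀ s ∈ Set.Icc t (t + h), ε / 2 ≤ ‖x s‖ := by
    intro s hs
    have hs0 : (0:ℝ) ≤ s := le_trans ht0 hs.1
    have hlip : ‖x s - x t‖ ≤ M' * ‖s - t‖ :=
      Convex.norm_image_sub_le_of_norm_hasDerivWithin_le
        (fun u hu => (hderiv u (le_trans ht0 hu.1)).hasDerivWithinAt)
        (fun u hu => hx'bd u (le_trans ht0 hu.1)) (convex_Icc t (t + h))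
        (Set.left_mem_Icc.mpr hab) hs
    have h1 : ‖s - t‖ ≤ h := by
      rw [Real.norm_eq_abs, abs_of_nonneg (by linarith [hs.1])]
      linarith [hs.2]
    have h2 : M' * h = ε / 2 := by
      rw [hhdef]; field_simp
    have h3 : ‖x s - x t‖ ≤ ε / 2 := by
      calc ‖x s - x t‖ ≤ M' * ‖s - t‖ := hlip
        _ ≤ M' * h := by nlinarith
        _ = ε / 2 := h2
    have := norm_sub_norm_le (x s) (x t)
    have h4 : ‖x s‖ - ‖x t‖ ≥ -(ε/2) := by
      have := norm_sub_norm_le (x t) (x s)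
      have h5 : ‖x t - x s‖ = ‖x s - x t‖ := norm_sub_rev _ _
      linarith
    linarith
  have hδle : ∀ s ∈ Set.Icc t (t + h), δ ≤ f s := by
    intro s hs
    apply hy₀min
    constructor
    · simpa [Metric.mem_closedBall, dist_eq_norm] using hxbd s (le_trans ht0 hs.1)
    · exact hlow s hs
  have hint1 : δ * h ≤ ∫ s in t..(t + h), f s := by
    have hmono := intervalIntegral.integral_mono_on hab
      (_root_.intervalIntegrable_const (c := δ)) (hfint t (t + h) ht0 hab) hδle
    rw [intervalIntegral.integral_const] at hmono
    have : (t + h - t) • δ = δ * h := by simp [smul_eq_mul]; ring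
    linarith [hmono, this.symm.le, this.le]
  have hsplit : (∫ s in t..(t + h), f s)
      = (∫ s in (0:ℝ)..(t + h), f s) - ∫ s in (0:ℝ)..t, f s := by
    rw [eq_sub_iff_add_eq, add_comm]
    exact intervalIntegral.integral_add_adjacent_intervals
      (hfint 0 t le_rfl ht0) (hfint t (t + h) ht0 hab)
  have hc1 := hT t htT
  have hc2 := hT (t + h) (by linarith)
  rw [Real.dist_eq] at hc1 hc2
  have hc1' := abs_lt.mp hc1
  have hc2' := abs_lt.mp hc2
  have : (∫ s in t..(t + h), f s) < δ * h := by
    rw [hsplit]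
    simp only [hfdef] at hc1' hc2' ⊢
    linarith [hc1'.1, hc1'.2, hc2'.1, hc2'.2]
  linarith
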